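/- log 2 = 2/3 + (1/4) · ∑_{k=1}^∞ (1/16^k) · ( 8/(8k) + 4/(8k+2) + 2/(8k+4) + 1/(8k+6) ), where log denotes the natural logarithm. -/

import Mathlib

set_option maxHeartbeats 1000000

theorem statement11 :
    Real.log 2 = 2 / 3 + (1 / 4) *
      ∑' k : ℕ, (1 / (16 : ℝ) ^ (k + 1)) *
        (8 / (8 * ((k : ℝ) + 1)) + 4 / (8 * ((k : ℝ) + 1) + 2)
          + 2 / (8 * ((k : ℝ) + 1) + 4) + 1 / (8 * ((k : ℝ) + 1) + 6)) := by
  set f : ℕ → ℝ := fun n => (1/2 : ℝ) ^ (n + 1) / (n + 1) with hf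
  have h1 : HasSum f (Real.log 2) := by
    have := Real.hasSum_pow_div_log_of_abs_lt_one (x := 1/2)
      (by rw [abs_of_pos] <;> norm_num)
    norm_num at this
    simpa [hf, Real.log_inv] using this
  have h2 : HasSum (fun n => f (n + 3)) (Real.log 2 - 2/3) := by
    refine (hasSum_nat_add_iff (f := f) 3).2 ?_
    convert h1 using 1
    · rfl
    have : ∑ i ∈ Finset.range 3, f i = 2/3 := by
      simp [hf, Finset.sum_range_succ]; norm_num
    rw [this]; ring
  have h3 : HasSum (fun p : ℕ × Fin 4 => f ((Nat.divModEquiv 4).symm p + 3))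
      (Real.log 2 - 2/3) := ((Nat.divModEquiv 4).symm.hasSum_iff).2 h2
  have h4 : HasSum (fun k : ℕ => (1/4 : ℝ) * ((1 / (16 : ℝ) ^ (k + 1)) *
      (8 / (8 * ((k : ℝ) + 1)) + 4 / (8 * ((k : ℝ) + 1) + 2)
        + 2 / (8 * ((k : ℝ) + 1) + 4) + 1 / (8 * ((k : ℝ) + 1) + 6))))
      (Real.log 2 - 2/3) := by
    refine h3.prod_fiberwise fun k => ?_
    have hfin : HasSum (fun r : Fin 4 => f ((Nat.divModEquiv 4).symm (k, r) + 3))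
        (∑ r : Fin 4, f ((Nat.divModEquiv 4).symm (k, r) + 3)) := hasSum_fintype _
    convert hfin using 1
    rw [Fin.sum_univ_four]
    have e0 : (Nat.divModEquiv 4).symm (k, (0 : Fin 4)) = k*4+0 := rfl
    have e1 : (Nat.divModEquiv 4).symm (k, (1 : Fin 4)) = k*4+1 := rfl
    have e2 : (Nat.divModEquiv 4).symm (k, (2 : Fin 4)) = k*4+2 := rfl
    have e3 : (Nat.divModEquiv 4).symm (k, (3 : Fin 4)) = k*4+3 := rfl
    rw [e0, e1, e2, e3]
    simp only [hf]
    have e : ∀ r : ℕ, ((1:ℝ)/2) ^ (k*4+r+4) = 1 / ((16:ℝ)^(k+1) * 2^r) := by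
      intro r
      rw [div_pow, one_pow, show k*4+r+4 = 4*(k+1)+r by ring, pow_add, pow_mul]
      norm_num
    push_cast
    rw [show k*4+0+3+1 = k*4+0+4 by ring, show k*4+1+3+1 = k*4+1+4 by ring,
      show k*4+2+3+1 = k*4+2+4 by ring, show k*4+3+3+1 = k*4+3+4 by ring,
      e 0, e 1, e 2, e 3]
    have h16 : ((16:ℝ)^(k+1)) ≠ 0 := by positivity
    have hk : ((k:ℝ)+1) ≠ 0 := by positivity
    have h1' : (k:ℝ)*4+0+4 ≠ 0 := by positivity
    have h2' : (k:ℝ)*4+1+4 ≠ 0 := by positivity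
    have h3' : (k:ℝ)*4+2+4 ≠ 0 := by positivity
    have h4' : (k:ℝ)*4+3+4 ≠ 0 := by positivity
    norm_num
    field_simp
    ring
  have := h4.tsum_eq
  rw [tsum_mul_left] at this
  linarith [this]
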